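/- Let D be a symmetric positive definite p×p real matrix, H a symmetric positive definite m×m real matrix, and A a p×m real matrix with ‖D⁻¹AH⁻¹‖ < 1. Then the block matrix 𝒟² = [[D², A], [Aᵀ, H²]] is symmetric positive definite, and, denoting by 𝒟 its unique symmetric positive definite square root, for every vector υ = (θ, η) ∈ ℝ^p × ℝ^m one has max(‖D⁻¹θ‖, ‖H⁻¹η‖) ≤ ‖𝒟⁻¹υ‖. -/

import Mathlib

open Matrix

/-- Euclidean norm of a vector in `ℝ^n`. -/
noncomputable def euclNorm {n : Type*} [Fintype n] (v : n → ℝ) : ℝ :=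
  Real.sqrt (∑ i, v i ^ 2)

/-- Spectral (L2 operator) norm of a real matrix. -/
noncomputable def specNorm {m n : Type*} [Fintype m] [Fintype n] [DecidableEq n]
    (M : Matrix m n ℝ) : ℝ :=
  ‖LinearMap.toContinuousLinearMap (Matrix.toEuclideanLin M)‖

lemma euclNorm_eq_norm {n : Type*} [Fintype n] (v : n → ℝ) :
    euclNorm v = ‖(WithLp.equiv 2 (n → ℝ)).symm v‖ := by
  rw [EuclideanSpace.norm_eq]
  simp [euclNorm, sq_abs]

lemma euclNorm_nonneg {n : Type*} [Fintype n] (v : n → ℝ) : 0 ≤ euclNorm v :=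
  Real.sqrt_nonneg _

lemma euclNorm_pos {n : Type*} [Fintype n] {v : n → ℝ} (hv : v ≠ 0) : 0 < euclNorm v := by
  rw [euclNorm_eq_norm]
  rw [norm_pos_iff]
  intro h
  apply hv
  have := congrArg (WithLp.equiv 2 (n → ℝ)) h
  simpa using this

lemma euclNorm_sq {n : Type*} [Fintype n] (v : n → ℝ) :
    euclNorm v ^ 2 = v ⬝ᵥ v := by
  rw [euclNorm, Real.sq_sqrt (Finset.sum_nonneg fun i _ => sq_nonneg _)]
  simp [dotProduct, sq]

lemma dotProduct_self_nonneg' {n : Type*} [Fintype n] (v : n → ℝ) : 0 ≤ v ⬝ᵥ v := by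
  rw [← euclNorm_sq]; exact sq_nonneg _

lemma abs_dotProduct_mulVec_le {a b : Type*} [Fintype a] [Fintype b] [DecidableEq b]
    (M : Matrix a b ℝ) (x : a → ℝ) (y : b → ℝ) :
    |x ⬝ᵥ (M *ᵥ y)| ≤ specNorm M * euclNorm x * euclNorm y := by
  set X := (WithLp.equiv 2 (a → ℝ)).symm x with hX
  set Y := (WithLp.equiv 2 (b → ℝ)).symm y with hY
  set L := LinearMap.toContinuousLinearMap (Matrix.toEuclideanLin M) with hL
  have h1 : x ⬝ᵥ (M *ᵥ y) = inner ℝ X (L Y) := by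
    simp only [hL, LinearMap.coe_toContinuousLinearMap', Matrix.toEuclideanLin_apply]
    rw [PiLp.inner_apply]
    simp [hX, hY, dotProduct, mul_comm]
  rw [h1, euclNorm_eq_norm, euclNorm_eq_norm, ← hX, ← hY]
  calc |inner ℝ X (L Y)| ≤ ‖X‖ * ‖L Y‖ := abs_real_inner_le_norm X (L Y)
    _ ≤ ‖X‖ * (‖L‖ * ‖Y‖) := by
        apply mul_le_mul_of_nonneg_left (L.le_opNorm Y) (norm_nonneg X)
    _ = specNorm M * ‖X‖ * ‖Y‖ := by rw [specNorm, ← hL]; ring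

lemma symm_dot {n : Type*} [Fintype n] {S : Matrix n n ℝ} (h : Sᵀ = S) (a b : n → ℝ) :
    a ⬝ᵥ (S *ᵥ b) = (S *ᵥ a) ⬝ᵥ b := by
  rw [dotProduct_mulVec]
  conv_lhs => rw [← h]
  rw [vecMul_transpose]

lemma key_ineq {n : Type*} [Fintype n] [DecidableEq n] {S : Matrix n n ℝ} (hS : S.PosDef)
    (w v : n → ℝ) :
    2 * (w ⬝ᵥ v) - w ⬝ᵥ ((S * S) *ᵥ w) ≤ (S⁻¹ *ᵥ v) ⬝ᵥ (S⁻¹ *ᵥ v) := by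
  have hsymm : Sᵀ = S := by
    have := hS.1
    rwa [← conjTranspose_eq_transpose_of_trivial]
  have hdet : IsUnit S.det := isUnit_iff_ne_zero.mpr hS.det_pos.ne'
  set x := S⁻¹ *ᵥ v with hx
  have hSx : S *ᵥ x = v := by
    rw [hx, mulVec_mulVec, mul_nonsing_inv _ hdet, one_mulVec]
  have h0 : 0 ≤ (x - S *ᵥ w) ⬝ᵥ (x - S *ᵥ w) := dotProduct_self_nonneg' _
  have e1 : x ⬝ᵥ (S *ᵥ w) = v ⬝ᵥ w := by rw [symm_dot hsymm, hSx]
  have e2 : (S *ᵥ w) ⬝ᵥ x = v ⬝ᵥ w := by rw [dotProduct_comm, e1]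
  have e3 : (S *ᵥ w) ⬝ᵥ (S *ᵥ w) = w ⬝ᵥ ((S * S) *ᵥ w) := by
    rw [← mulVec_mulVec, symm_dot hsymm w (S *ᵥ w)]
  have expand : (x - S *ᵥ w) ⬝ᵥ (x - S *ᵥ w)
      = x ⬝ᵥ x - 2 * (v ⬝ᵥ w) + w ⬝ᵥ ((S * S) *ᵥ w) := by
    rw [sub_dotProduct, dotProduct_sub, dotProduct_sub, e1, e2, e3]; ring
  rw [expand] at h0
  have : v ⬝ᵥ w = w ⬝ᵥ v := dotProduct_comm _ _
  linarith

theorem stmt0 {p m : ℕ} (D : Matrix (Fin p) (Fin p) ℝ) (H : Matrix (Fin m) (Fin m) ℝ)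
    (A : Matrix (Fin p) (Fin m) ℝ)
    (hD : D.PosDef) (hH : H.PosDef)
    (hA : specNorm (D⁻¹ * A * H⁻¹) < 1) :
    (Matrix.fromBlocks (D * D) A Aᵀ (H * H)).PosDef ∧
    (∃! S : Matrix (Fin p ⊕ Fin m) (Fin p ⊕ Fin m) ℝ,
        S.PosDef ∧ S * S = Matrix.fromBlocks (D * D) A Aᵀ (H * H)) ∧
    (∀ S : Matrix (Fin p ⊕ Fin m) (Fin p ⊕ Fin m) ℝ,
      S.PosDef → S * S = Matrix.fromBlocks (D * D) A Aᵀ (H * H) →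
      ∀ θ : Fin p → ℝ, ∀ η : Fin m → ℝ,
        max (euclNorm (D⁻¹.mulVec θ)) (euclNorm (H⁻¹.mulVec η))
          ≤ euclNorm (S⁻¹.mulVec (Sum.elim θ η))) := by
  have hDsymm : Dᵀ = D := by
    have := hD.1; rwa [← conjTranspose_eq_transpose_of_trivial]
  have hHsymm : Hᵀ = H := by
    have := hH.1; rwa [← conjTranspose_eq_transpose_of_trivial]
  have hDdet : IsUnit D.det := isUnit_iff_ne_zero.mpr hD.det_pos.ne'
  have hHdet : IsUnit H.det := isUnit_iff_ne_zero.mpr hH.det_pos.ne'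
  have hDinvsymm : (D⁻¹)ᵀ = D⁻¹ := by rw [transpose_nonsing_inv, hDsymm]
  have hHinvsymm : (H⁻¹)ᵀ = H⁻¹ := by rw [transpose_nonsing_inv, hHsymm]
  have hc0 : 0 ≤ specNorm (D⁻¹ * A * H⁻¹) := norm_nonneg _
  set B := Matrix.fromBlocks (D * D) A Aᵀ (H * H) with hBdef
  -- Part 1
  have hBherm : B.IsHermitian := by
    rw [IsHermitian, conjTranspose_eq_transpose_of_trivial, hBdef, fromBlocks_transpose,
      transpose_mul, transpose_mul, hDsymm, hHsymm, transpose_transpose]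
  have hApart : ∀ (θ : Fin p → ℝ) (η : Fin m → ℝ),
      |θ ⬝ᵥ (A *ᵥ η)| ≤ specNorm (D⁻¹ * A * H⁻¹) * euclNorm (D *ᵥ θ) * euclNorm (H *ᵥ η) := by
    intro θ η
    have hAeq : D * (D⁻¹ * A * H⁻¹ * H) = A := by
      simp only [Matrix.mul_assoc]
      rw [nonsing_inv_mul _ hHdet, Matrix.mul_one, ← Matrix.mul_assoc,
        mul_nonsing_inv _ hDdet, Matrix.one_mul]
    have : θ ⬝ᵥ (A *ᵥ η) = (D *ᵥ θ) ⬝ᵥ ((D⁻¹ * A * H⁻¹) *ᵥ (H *ᵥ η)) := by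
      rw [mulVec_mulVec, ← symm_dot hDsymm, mulVec_mulVec, hAeq]
    rw [this]
    exact abs_dotProduct_mulVec_le _ _ _
  have hBpos : B.PosDef := by
    refine PosDef.of_dotProduct_mulVec_pos hBherm (fun x hx => ?_)
    have hxel : x = Sum.elim (x ∘ Sum.inl) (x ∘ Sum.inr) := (Sum.elim_comp_inl_inr x).symm
    set θ := x ∘ Sum.inl with hθ
    set η := x ∘ Sum.inr with hη
    set a := euclNorm (D *ᵥ θ) with ha
    set b := euclNorm (H *ᵥ η) with hb
    set c := specNorm (D⁻¹ * A * H⁻¹) with hcc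
    have hform : (Sum.elim θ η) ⬝ᵥ (B *ᵥ (Sum.elim θ η)) = a ^ 2 + b ^ 2 + 2 * (θ ⬝ᵥ (A *ᵥ η)) := by
      rw [hBdef, fromBlocks_mulVec]
      simp only [Sum.elim_comp_inl, Sum.elim_comp_inr]
      rw [sumElim_dotProduct_sumElim, dotProduct_add, dotProduct_add]
      have t1 : θ ⬝ᵥ ((D * D) *ᵥ θ) = a ^ 2 := by
        rw [← mulVec_mulVec, symm_dot hDsymm, euclNorm_sq]
      have t2 : η ⬝ᵥ ((H * H) *ᵥ η) = b ^ 2 := by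
        rw [← mulVec_mulVec, symm_dot hHsymm, euclNorm_sq]
      have t3 : η ⬝ᵥ (Aᵀ *ᵥ θ) = θ ⬝ᵥ (A *ᵥ η) := by
        rw [dotProduct_mulVec, vecMul_transpose, dotProduct_comm]
      rw [t1, t2, t3]; ring
    have hstar : star x = x := by funext i; simp
    have habs := hApart θ η
    rw [← ha, ← hb] at habs
    have hab : 0 ≤ a := euclNorm_nonneg _
    have hbb : 0 ≤ b := euclNorm_nonneg _
    have hpos : 0 < a ^ 2 + b ^ 2 := by
      have : θ ≠ 0 ∨ η ≠ 0 := by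
        by_contra h
        push_neg at h
        apply hx
        rw [hxel, h.1, h.2]
        funext i; cases i <;> rfl
      rcases this with hθ0 | hη0
      · have hDθ : D *ᵥ θ ≠ 0 := by
          intro h
          apply hθ0
          have : D⁻¹ *ᵥ (D *ᵥ θ) = θ := by
            rw [mulVec_mulVec, nonsing_inv_mul _ hDdet, one_mulVec]
          rw [h, mulVec_zero] at this
          exact this.symm
        have := euclNorm_pos hDθ
        nlinarith [sq_nonneg b]
      · have hHη : H *ᵥ η ≠ 0 := by
          intro h
          apply hη0
          have : H⁻¹ *ᵥ (H *ᵥ η) = η := by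
            rw [mulVec_mulVec, nonsing_inv_mul _ hHdet, one_mulVec]
          rw [h, mulVec_zero] at this
          exact this.symm
        have := euclNorm_pos hHη
        nlinarith [sq_nonneg a]
    rw [hstar]
    conv_rhs => rw [hxel]
    rw [hform]
    have h1 : -(c * a * b) ≤ θ ⬝ᵥ (A *ᵥ η) := by
      have := abs_le.mp habs
      linarith [this.1]
    nlinarith [mul_nonneg hc0 (sq_nonneg (a - b)), mul_pos (show (0:ℝ) < 1 - c by linarith) hpos]
  refine ⟨hBpos, ?_, ?_⟩
  · -- Part 2: unique PD square root
    have hBsd := hBpos.posSemidef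
    open scoped MatrixOrder in
    have hSq : (CFC.sqrt B).PosSemidef := (CFC.sqrt_nonneg B).posSemidef
    open scoped MatrixOrder in
    refine ⟨CFC.sqrt B, ⟨?_, CFC.sqrt_mul_sqrt_self B hBsd.nonneg⟩, ?_⟩
    · refine PosDef.of_dotProduct_mulVec_pos hSq.1 (fun x hx => ?_)
      rcases lt_or_eq_of_le (hSq.dotProduct_mulVec_nonneg x) with h | h
      · exact h
      · exfalso
        have hz : CFC.sqrt B *ᵥ x = 0 :=
          (hSq.dotProduct_mulVec_zero_iff x).mp h.symm
        have hBx : B *ᵥ x = 0 := by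
          open scoped MatrixOrder in
          rw [← CFC.sqrt_mul_sqrt_self B hBsd.nonneg, ← mulVec_mulVec, hz, mulVec_zero]
        have := hBpos.dotProduct_mulVec_pos hx
        rw [hBx, dotProduct_zero] at this
        exact lt_irrefl 0 this
    · rintro Y ⟨h1, h2⟩
      open scoped MatrixOrder in
      exact (CFC.sqrt_unique h2 h1.posSemidef.nonneg).symm
  · -- Part 3
    intro S hS hSS θ η
    have hRHSnn : 0 ≤ euclNorm (S⁻¹ *ᵥ Sum.elim θ η) := euclNorm_nonneg _
    have hsq : ∀ z : ℝ, 0 ≤ z → z ^ 2 ≤ euclNorm (S⁻¹ *ᵥ Sum.elim θ η) ^ 2 →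
        z ≤ euclNorm (S⁻¹ *ᵥ Sum.elim θ η) := by
      intro z hz h
      nlinarith
    rw [max_le_iff]
    constructor
    · -- D side
      apply hsq _ (euclNorm_nonneg _)
      set u := (D⁻¹ * D⁻¹) *ᵥ θ with hu
      have hDDinv : (D * D)⁻¹ = D⁻¹ * D⁻¹ := by rw [Matrix.mul_inv_rev]
      have hDu : (D * D) *ᵥ u = θ := by
        rw [hu, mulVec_mulVec, ← hDDinv, mul_nonsing_inv _ (by
          rw [det_mul]; exact hDdet.mul hDdet), one_mulVec]
      have hLHS : euclNorm (D⁻¹ *ᵥ θ) ^ 2 = u ⬝ᵥ θ := by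
        rw [euclNorm_sq, symm_dot hDinvsymm, mulVec_mulVec, hu]
      set w : (Fin p ⊕ Fin m) → ℝ := Sum.elim u 0 with hw
      have hwv : w ⬝ᵥ Sum.elim θ η = u ⬝ᵥ θ := by
        rw [hw, sumElim_dotProduct_sumElim, zero_dotProduct, add_zero]
      have hwBw : w ⬝ᵥ ((S * S) *ᵥ w) = u ⬝ᵥ θ := by
        rw [hSS, hw, hBdef, fromBlocks_mulVec, sumElim_dotProduct_sumElim]
        simp [Sum.elim_comp_inl, Sum.elim_comp_inr, hDu]
      have := key_ineq hS w (Sum.elim θ η)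
      rw [hwv, hwBw] at this
      rw [hLHS, euclNorm_sq]
      linarith
    · -- H side
      apply hsq _ (euclNorm_nonneg _)
      set u := (H⁻¹ * H⁻¹) *ᵥ η with hu
      have hHHinv : (H * H)⁻¹ = H⁻¹ * H⁻¹ := by rw [Matrix.mul_inv_rev]
      have hHu : (H * H) *ᵥ u = η := by
        rw [hu, mulVec_mulVec, ← hHHinv, mul_nonsing_inv _ (by
          rw [det_mul]; exact hHdet.mul hHdet), one_mulVec]
      have hLHS : euclNorm (H⁻¹ *ᵥ η) ^ 2 = u ⬝ᵥ η := by
        rw [euclNorm_sq, symm_dot hHinvsymm, mulVec_mulVec, hu]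
      set w : (Fin p ⊕ Fin m) → ℝ := Sum.elim 0 u with hw
      have hwv : w ⬝ᵥ Sum.elim θ η = u ⬝ᵥ η := by
        rw [hw, sumElim_dotProduct_sumElim, zero_dotProduct, zero_add]
      have hwBw : w ⬝ᵥ ((S * S) *ᵥ w) = u ⬝ᵥ η := by
        rw [hSS, hw, hBdef, fromBlocks_mulVec, sumElim_dotProduct_sumElim]
        simp [Sum.elim_comp_inl, Sum.elim_comp_inr, hHu]
      have := key_ineq hS w (Sum.elim θ η)
      rw [hwv, hwBw] at this
      rw [hLHS, euclNorm_sq]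
      linarith
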